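/- Let σ and τ be affine simplices in ℝ^m of dimensions k and ℓ with k + ℓ = m, whose combined vertex set of m+2 points is in general position (any m+1 affinely independent), oriented by the increasing order of their vertex indices. Then σ ∩ τ is either empty or a single point, and hence the intersection number satisfies |ℐ(σ,τ)| ≤ 1. -/

import Mathlib

open Classical in
/-- The signed intersection number of two affine simplices of dimensions `k` and `ℓ` in `ℝ^m`
(given by their vertex tuples, oriented by increasing index order): it is `0` if the convex
hulls are disjoint, and otherwise the sign of the determinant
`det((1,p),(1,σ_1),…,(1,σ_k),(1,τ_1),…,(1,τ_ℓ))` where `p` is an intersection point. -/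
noncomputable def simplexInter {m k l : ℕ} (σv : Fin (k + 1) → Fin m → ℝ)
    (τv : Fin (l + 1) → Fin m → ℝ) : ℝ :=
  if h : ((convexHull ℝ (Set.range σv)) ∩ (convexHull ℝ (Set.range τv))).Nonempty then
    Real.sign (Matrix.det (Matrix.of fun (i j : Fin (m + 1)) =>
      (if (j : ℕ) = 0 then Fin.cons (1 : ℝ) h.some
       else if hj : (j : ℕ) < k + 1 then Fin.cons (1 : ℝ) (σv ⟨(j : ℕ), hj⟩)
       else if hj2 : (j : ℕ) - k < l + 1 then Fin.cons (1 : ℝ) (τv ⟨(j : ℕ) - k, hj2⟩)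
       else 0 : Fin (m + 1) → ℝ) i))
  else 0

/-- Every element of the convex hull of the range of a finite family is a convex
combination of the family. -/
lemma exists_weights_of_mem_convexHull {n m : ℕ} (v : Fin n → Fin m → ℝ)
    {x : Fin m → ℝ} (hx : x ∈ convexHull ℝ (Set.range v)) :
    ∃ w : Fin n → ℝ, (∑ i, w i) = 1 ∧ (∑ i, w i • v i) = x := by
  rw [convexHull_range_eq_exists_affineCombination] at hx
  obtain ⟨s, w, _, hw1, hxe⟩ := hx
  refine ⟨Set.indicator (↑s) w, ?_, ?_⟩
  · rw [← Finset.sum_indicator_subset w (Finset.subset_univ s)] at hw1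
    exact hw1
  · rw [s.affineCombination_eq_linear_combination v w hw1] at hxe
    rw [← hxe]
    have h1 : (∑ i, Set.indicator (↑s) w i • v i)
        = ∑ i ∈ s, Set.indicator (↑s) w i • v i :=
      (Finset.sum_subset (Finset.subset_univ s) (fun i _ hi => by
        rw [Set.indicator_of_notMem (fun h => hi (Finset.mem_coe.mp h)), zero_smul])).symm
    rw [h1]
    exact Finset.sum_congr rfl fun i hi => by
      rw [Set.indicator_of_mem (Finset.mem_coe.mpr hi)]

/-- Two affine simplices of complementary dimensions `k + ℓ = m` in `ℝ^m` whose
combined `m+2` vertices are in general position (any `m+1` of them affinely independent) meet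
in at most one point, and hence their intersection number satisfies `|ℐ(σ,τ)| ≤ 1`. -/
theorem stmt8 (m k l : ℕ) (hkl : k + l = m)
    (σv : Fin (k + 1) → Fin m → ℝ) (τv : Fin (l + 1) → Fin m → ℝ)
    (hgp : ∀ S : Finset (Fin (k + 1) ⊕ Fin (l + 1)), S.card ≤ m + 1 →
      AffineIndependent ℝ (fun z : {a // a ∈ S} => Sum.elim σv τv z.1)) :
    ((convexHull ℝ (Set.range σv)) ∩ (convexHull ℝ (Set.range τv))).Subsingleton ∧
    |simplexInter σv τv| ≤ 1 := by
  classical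
  set ι := Fin (k + 1) ⊕ Fin (l + 1)
  set P : ι → Fin m → ℝ := Sum.elim σv τv with hP
  -- Key: any affine dependence vanishing at one index vanishes everywhere.
  have key : ∀ (g : ι → ℝ) (i₀ : ι), (∑ i, g i) = 0 → (∑ i, g i • P i) = 0 →
      g i₀ = 0 → ∀ i, g i = 0 := by
    intro g i₀ hsum hwsum hg0 i
    rcases eq_or_ne i i₀ with rfl | hne
    · exact hg0
    set S : Finset ι := Finset.univ.erase i₀ with hS
    have hcard : S.card = m + 1 := by
      rw [hS, Finset.card_erase_of_mem (Finset.mem_univ _), Finset.card_univ]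
      simp [ι, ← hkl]
      omega
    have hAI := hgp S (le_of_eq hcard)
    rw [affineIndependent_iff_of_fintype] at hAI
    have hsumS : (∑ j ∈ S, g j) = 0 := by
      rw [hS, Finset.sum_erase _ hg0]; exact hsum
    have hwsumS : (∑ j ∈ S, g j • P j) = 0 := by
      rw [hS, Finset.sum_erase _ (by rw [hg0, zero_smul])]; exact hwsum
    have hsum' : (∑ z : {a // a ∈ S}, g z.1) = 0 := by
      rw [Finset.sum_coe_sort S g]; exact hsumS
    have := hAI (fun z => g z.1) hsum' ?_ ⟨i, by simp [hS, hne]⟩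
    · exact this
    · rw [Finset.weightedVSub_eq_linear_combination _ hsum']
      rw [Finset.sum_coe_sort S (fun j => g j • P j)]
      exact hwsumS
  constructor
  · -- subsingleton
    rintro p ⟨hpσ, hpτ⟩ q ⟨hqσ, hqτ⟩
    obtain ⟨a, ha1, haP⟩ := exists_weights_of_mem_convexHull σv hpσ
    obtain ⟨b, hb1, hbP⟩ := exists_weights_of_mem_convexHull σv hqσ
    obtain ⟨c, hc1, hcP⟩ := exists_weights_of_mem_convexHull τv hpτ
    obtain ⟨d, hd1, hdP⟩ := exists_weights_of_mem_convexHull τv hqτ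
    set e : ι → ℝ := Sum.elim a (fun j => -c j) with he
    set f : ι → ℝ := Sum.elim b (fun j => -d j) with hf
    have hesum : (∑ i, e i) = 0 := by
      rw [he, Fintype.sum_sum_type]
      simp only [Sum.elim_inl, Sum.elim_inr, Finset.sum_neg_distrib]
      rw [ha1, hc1]; ring
    have hfsum : (∑ i, f i) = 0 := by
      rw [hf, Fintype.sum_sum_type]
      simp only [Sum.elim_inl, Sum.elim_inr, Finset.sum_neg_distrib]
      rw [hb1, hd1]; ring
    have hewsum : (∑ i, e i • P i) = 0 := by
      rw [he, Fintype.sum_sum_type]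
      simp only [Sum.elim_inl, Sum.elim_inr, hP, neg_smul, Finset.sum_neg_distrib]
      rw [haP, hcP]; ring
    have hfwsum : (∑ i, f i • P i) = 0 := by
      rw [hf, Fintype.sum_sum_type]
      simp only [Sum.elim_inl, Sum.elim_inr, hP, neg_smul, Finset.sum_neg_distrib]
      rw [hbP, hdP]; ring
    -- find a nonzero coordinate of e among the σ part
    have : ∃ i : Fin (k + 1), a i ≠ 0 := by
      by_contra h
      push_neg at h
      rw [Finset.sum_congr rfl (fun i _ => h i)] at ha1
      simp at ha1
    obtain ⟨i₀, hi₀⟩ := this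
    set lam : ℝ := b i₀ / a i₀ with hlam
    set g : ι → ℝ := fun j => f j - lam * e j with hg
    have hgsum : (∑ i, g i) = 0 := by
      simp only [hg, Finset.sum_sub_distrib, ← Finset.mul_sum, hesum, hfsum]; ring
    have hgwsum : (∑ i, g i • P i) = 0 := by
      have : ∀ j, g j • P j = f j • P j - lam • (e j • P j) := by
        intro j; rw [hg]; simp [sub_smul, smul_smul]
      rw [Finset.sum_congr rfl (fun j _ => this j), Finset.sum_sub_distrib,
        ← Finset.smul_sum, hewsum, hfwsum]
      simp
    have hg0 : g (Sum.inl i₀) = 0 := by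
      simp only [hg, hf, he, Sum.elim_inl, hlam]
      field_simp; ring
    have hgzero := key g (Sum.inl i₀) hgsum hgwsum hg0
    -- so f = lam • e; summing σ-coordinates gives lam = 1
    have hfe : ∀ j : Fin (k + 1), b j = lam * a j := by
      intro j
      have := hgzero (Sum.inl j)
      simp only [hg, hf, he, Sum.elim_inl, sub_eq_zero] at this
      exact this
    have hlam1 : lam = 1 := by
      have : (∑ j, b j) = lam * ∑ j, a j := by
        rw [Finset.mul_sum]; exact Finset.sum_congr rfl (fun j _ => hfe j)
      rw [hb1, ha1, mul_one] at this
      exact this.symm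
    have hab : ∀ j, b j = a j := fun j => by rw [hfe j, hlam1, one_mul]
    rw [← haP, ← hbP]
    exact (Finset.sum_congr rfl (fun j _ => by rw [hab j])).symm
  · -- |simplexInter| ≤ 1
    unfold simplexInter
    split_ifs with h
    · rcases Real.sign_apply_eq (Matrix.det (Matrix.of fun (i j : Fin (m + 1)) =>
        (if (j : ℕ) = 0 then Fin.cons (1 : ℝ) h.some
         else if hj : (j : ℕ) < k + 1 then Fin.cons (1 : ℝ) (σv ⟨(j : ℕ), hj⟩)
         else if hj2 : (j : ℕ) - k < l + 1 then Fin.cons (1 : ℝ) (τv ⟨(j : ℕ) - k, hj2⟩)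
         else 0 : Fin (m + 1) → ℝ) i)) with h1 | h1 | h1 <;> rw [h1] <;> norm_num
    · norm_num
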